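/- arXiv:2109.06259 — 15 statements merged into one kernel-verified Lean document; each statement's English description precedes it below -/
import Mathlib

section
/- In a system (A,p,0,1) satisfying C1–C4, negation defined by ā = p(1,a,0) is an involution: the double negation of a equals a. -/
theorem stmt_1 {A : Type*} (p : A → A → A → A) (z o : A)
    (C1 : ∀ a, p z a o = a)
    (C2 : ∀ a b, p a b a = a)
    (C3 : ∀ a b1 b2 b3 c, p a (p b1 b2 b3) c = p (p a b1 c) b2 (p a b3 c))
    (C4 : ∀ a b, p a z b = a ∧ p b o a = a) :
    ∀ a, p o (p o a z) z = a := by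
  intro a
  rw [C3, (C4 z o).2, (C4 o z).1, C1]
end

section
/- In a system (A,p,0,1) satisfying C1–C4, for all a,b,c: p(c,b,a) = p(a,b̄,c), where b̄ = p(1,b,0). -/
theorem stmt_2 {A : Type*} (p : A → A → A → A) (z o : A)
    (C1 : ∀ a, p z a o = a)
    (C2 : ∀ a b, p a b a = a)
    (C3 : ∀ a b1 b2 b3 c, p a (p b1 b2 b3) c = p (p a b1 c) b2 (p a b3 c))
    (C4 : ∀ a b, p a z b = a ∧ p b o a = a) :
    ∀ a b c, p c b a = p a (p o b z) c := by
  intro a b c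
  rw [C3, (C4 a c).1, (C4 c a).2]
end

section
/- In a system (A,p,0,1) satisfying C1–C4, the negation of p(a,b,c) equals p(c̄,b̄,ā), where x̄ = p(1,x,0). -/
theorem stmt_4 {A : Type*} (p : A → A → A → A) (z o : A)
    (C1 : ∀ a, p z a o = a)
    (C2 : ∀ a b, p a b a = a)
    (C3 : ∀ a b1 b2 b3 c, p a (p b1 b2 b3) c = p (p a b1 c) b2 (p a b3 c))
    (C4 : ∀ a b, p a z b = a ∧ p b o a = a) :
    ∀ a b c, p o (p a b c) z = p (p o c z) (p o b z) (p o a z) := by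
  intro a b c
  have h4a : ∀ x y, p x z y = x := fun x y => (C4 x y).1
  have h4b : ∀ x y, p x o y = y := fun x y => (C4 y x).2
  rw [C3, C3, h4a, h4b]
end

section
/- In a system (A,p,0,1) satisfying C1–C4, with a∧b = p(0,a,b), a∨b = p(a,b,1) and x̄ = p(1,x,0), De Morgan's laws hold in the form: the negation of a∧b equals b̄∨ā, and the negation of a∨b equals b̄∧ā. -/
theorem stmt_5 {A : Type*} (p : A → A → A → A) (z o : A)
    (C1 : ∀ a, p z a o = a)
    (C2 : ∀ a b, p a b a = a)
    (C3 : ∀ a b1 b2 b3 c, p a (p b1 b2 b3) c = p (p a b1 c) b2 (p a b3 c))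
    (C4 : ∀ a b, p a z b = a ∧ p b o a = a) :
    ∀ a b, p o (p z a b) z = p (p o b z) (p o a z) o ∧ p o (p a b o) z = p z (p o b z) (p o a z) := by
  have hz : ∀ a b, p a z b = a := fun a b => (C4 a b).1
  have ho : ∀ a b, p b o a = a := fun a b => (C4 a b).2
  intro a b
  constructor
  · rw [C3, C3, hz, ho, hz]
  · rw [C3, C3, ho, hz, ho]
end

section
/- In a system (A,p,0,1) satisfying C1–C4, the operation a∧b = p(0,a,b) is associative with identity 1, i.e., (A,∧,1) is a monoid. -/
theorem stmt_6 {A : Type*} (p : A → A → A → A) (z o : A)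
    (C1 : ∀ a, p z a o = a)
    (C2 : ∀ a b, p a b a = a)
    (C3 : ∀ a b1 b2 b3 c, p a (p b1 b2 b3) c = p (p a b1 c) b2 (p a b3 c))
    (C4 : ∀ a b, p a z b = a ∧ p b o a = a) :
    (∀ a b c, p z (p z a b) c = p z a (p z b c)) ∧ (∀ a, p z a o = a ∧ p z o a = a) := by
  refine ⟨fun a b c => ?_, fun a => ⟨C1 a, (C4 a z).2⟩⟩
  rw [C3, (C4 z c).1]
end

section
/- In a system (A,p,0,1) satisfying C1–C4, the operation a∨b = p(a,b,1) is associative with identity 0, i.e., (A,∨,0) is a monoid. -/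
theorem stmt_7 {A : Type*} (p : A → A → A → A) (z o : A)
    (C1 : ∀ a, p z a o = a)
    (C2 : ∀ a b, p a b a = a)
    (C3 : ∀ a b1 b2 b3 c, p a (p b1 b2 b3) c = p (p a b1 c) b2 (p a b3 c))
    (C4 : ∀ a b, p a z b = a ∧ p b o a = a) :
    (∀ a b c, p (p a b o) c o = p a (p b c o) o) ∧ (∀ a, p a z o = a ∧ p z a o = a) := by
  constructor
  · intro a b c
    have h : p a o o = o := (C4 o a).2
    rw [C3, h]
  · intro a
    exact ⟨(C4 a o).1, C1 a⟩
end

section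
/- In a system (A,p,0,1) satisfying C1–C4 with x̄ = p(1,x,0), a∧b = p(0,a,b), a∨b = p(a,b,1): ∧ is commutative if and only if ∨ is commutative. -/
theorem stmt_9 {A : Type*} (p : A → A → A → A) (z o : A)
    (C1 : ∀ a, p z a o = a)
    (C2 : ∀ a b, p a b a = a)
    (C3 : ∀ a b1 b2 b3 c, p a (p b1 b2 b3) c = p (p a b1 c) b2 (p a b3 c))
    (C4 : ∀ a b, p a z b = a ∧ p b o a = a) :
    (∀ a b, p z a b = p z b a) ↔ (∀ a b, p a b o = p b a o) := by
  have hz : ∀ a b, p a z b = a := fun a b => (C4 a b).1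
  have ho : ∀ a b, p a o b = b := fun a b => (C4 b a).2
  set c : A → A := fun x => p o x z with hc
  -- complement of meet: c (p z a b) = p o a (c b)
  have compMeet : ∀ a b, c (p z a b) = p o a (c b) := by
    intro a b
    show p o (p z a b) z = p o a (p o b z)
    rw [C3, hz]
  -- involution
  have inv : ∀ x, c (c x) = x := by
    intro x
    show p o (p o x z) z = x
    rw [C3, ho, hz, C1]
  -- key: p b a o = c (p z (c a) (c b))
  have key : ∀ a b, p b a o = c (p z (c a) (c b)) := by
    intro a b
    rw [compMeet, inv]
    show p b a o = p o (p o a z) b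
    rw [C3, ho, hz]
  constructor
  · intro hm a b
    rw [key b a, key a b, hm]
  · intro hj a b
    have h : ∀ x y, p z (c x) (c y) = p z (c y) (c x) := by
      intro x y
      have := (key x y).symm.trans ((hj y x).trans (key y x))
      have h2 := congrArg c this
      rwa [inv, inv] at h2
    calc p z a b = p z (c (c a)) (c (c b)) := by rw [inv, inv]
      _ = p z (c (c b)) (c (c a)) := h _ _
      _ = p z b a := by rw [inv, inv]
end

section
/- In a system (A,p,0,1) satisfying C1–C4 with x̄ = p(1,x,0), a∧b = p(0,a,b), a∨b = p(a,b,1): ∧ is idempotent if and only if ∨ is idempotent. -/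
theorem stmt_10 {A : Type*} (p : A → A → A → A) (z o : A)
    (C1 : ∀ a, p z a o = a)
    (C2 : ∀ a b, p a b a = a)
    (C3 : ∀ a b1 b2 b3 c, p a (p b1 b2 b3) c = p (p a b1 c) b2 (p a b3 c))
    (C4 : ∀ a b, p a z b = a ∧ p b o a = a) :
    (∀ a, p z a a = a) ↔ (∀ a, p a a o = a) := by
  have R4a : ∀ u v, p u z v = u := fun u v => (C4 u v).1
  have R4b : ∀ u v, p u o v = v := fun u v => (C4 v u).2
  have inv : ∀ x, p o (p o x z) z = x := by
    intro x
    rw [C3, R4b, R4a, C1]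
  have key1 : ∀ x, p (p o x z) (p o x z) o = p o (p z x x) z := by
    intro x
    have L : p (p o x z) (p o x z) o = p o x (p o x z) := by
      rw [C3, R4b, R4a]
    have R : p o (p z x x) z = p o x (p o x z) := by
      rw [C3, R4a]
    rw [L, R]
  have key2 : ∀ x, p z (p o x z) (p o x z) = p o (p x x o) z := by
    intro x
    have L : p z (p o x z) (p o x z) = p (p o x z) x z := by
      rw [C3, R4b, R4a]
    have R : p o (p x x o) z = p (p o x z) x z := by
      rw [C3, R4b]
    rw [L, R]
  constructor
  · intro h a
    calc p a a o = p (p o (p o a z) z) (p o (p o a z) z) o := by rw [inv]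
    _ = p o (p z (p o a z) (p o a z)) z := key1 (p o a z)
    _ = p o (p o a z) z := by rw [h]
    _ = a := inv a
  · intro h a
    calc p z a a = p z (p o (p o a z) z) (p o (p o a z) z) := by rw [inv]
    _ = p o (p (p o a z) (p o a z) o) z := key2 (p o a z)
    _ = p o (p o a z) z := by rw [h]
    _ = a := inv a
end

section
/- In a system (A,p,0,1) satisfying C1–C4, if ∧ and ∨ (defined by a∧b = p(0,a,b), a∨b = p(a,b,1)) are commutative and idempotent, then the absorption laws a∨(b∧a) = a and (b∧a)∨a = a hold. -/
theorem stmt_11 {A : Type*} (p : A → A → A → A) (z o : A)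
    (C1 : ∀ a, p z a o = a)
    (C2 : ∀ a b, p a b a = a)
    (C3 : ∀ a b1 b2 b3 c, p a (p b1 b2 b3) c = p (p a b1 c) b2 (p a b3 c))
    (C4 : ∀ a b, p a z b = a ∧ p b o a = a)
    (hmc : ∀ a b, p z a b = p z b a) (hjc : ∀ a b, p a b o = p b a o)
    (hmi : ∀ a, p z a a = a) (hji : ∀ a, p a a o = a) :
    ∀ a b, p a (p z b a) o = a ∧ p (p z b a) a o = a := by
  intro a b
  have h1 : p a (p z b a) o = a := by
    rw [C3, (C4 a o).1, hji, C2]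
  exact ⟨h1, by rw [hjc]; exact h1⟩
end

section
/- In a system (A,p,0,1) satisfying C1–C4, if the operations a∧b = p(0,a,b) and a∨b = p(a,b,1) are commutative and idempotent, then they distribute over each other: (b∨c)∧a = (b∧a)∨(c∧a) and a∨(b∧c) = (a∨b)∧(a∨c). -/
theorem stmt_12 {A : Type*} (p : A → A → A → A) (z o : A)
    (C1 : ∀ a, p z a o = a)
    (C2 : ∀ a b, p a b a = a)
    (C3 : ∀ a b1 b2 b3 c, p a (p b1 b2 b3) c = p (p a b1 c) b2 (p a b3 c))
    (C4 : ∀ a b, p a z b = a ∧ p b o a = a)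
    (hmc : ∀ a b, p z a b = p z b a) (hjc : ∀ a b, p a b o = p b a o)
    (hmi : ∀ a, p z a a = a) (hji : ∀ a, p a a o = a) :
    ∀ a b c, p z (p b c o) a = p (p z b a) (p z c a) o ∧ p a (p z b c) o = p z (p a b o) (p a c o) := by
  intro a b c
  have hz : ∀ x y, p x z y = x := fun x y => (C4 x y).1
  have ho : ∀ x y, p x o y = y := fun x y => (C4 y x).2
  constructor
  · have h1 : p z (p b c o) a = p (p z b a) c a := by
      rw [C3, ho]
    have h2 : p (p z b a) (p z c a) o = p (p z b a) c a := by
      have key : p (p z b a) a o = a := by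
        rw [hjc, C3, hz, hji, C2]
      rw [C3, hz, key]
    rw [h1, h2]
  · have h1 : p a (p z b c) o = p a b (p a c o) := by
      rw [C3, hz]
    have h2 : p z (p a b o) (p a c o) = p a b (p a c o) := by
      have key : p z a (p a c o) = a := by
        rw [hmc, C3, hmi, ho, C2]
      rw [C3, ho, key]
    rw [h1, h2]
end

section
/- In a system (A,p,0,1) satisfying C1–C4, for all a,b,c: p(a,b,c)∧c = (a∨b)∧c, where a∧b = p(0,a,b) and a∨b = p(a,b,1). -/
theorem stmt_13 {A : Type*} (p : A → A → A → A) (z o : A)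
    (C1 : ∀ a, p z a o = a)
    (C2 : ∀ a b, p a b a = a)
    (C3 : ∀ a b1 b2 b3 c, p a (p b1 b2 b3) c = p (p a b1 c) b2 (p a b3 c))
    (C4 : ∀ a b, p a z b = a ∧ p b o a = a)
    (hmi : ∀ c, p z c c = c) :
    ∀ a b c, p z (p a b c) c = p z (p a b o) c := by
  intro a b c
  rw [C3, C3, hmi, (C4 c z).2]
end

section
/- In a system (A,p,0,1) satisfying C1–C4 with ∨ idempotent, for all a,b,c: c∨p(a,b,c) = c∨(b̄∧a), where a∧b = p(0,a,b), a∨b = p(a,b,1), x̄ = p(1,x,0). -/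
theorem stmt_14 {A : Type*} (p : A → A → A → A) (z o : A)
    (C1 : ∀ a, p z a o = a)
    (C2 : ∀ a b, p a b a = a)
    (C3 : ∀ a b1 b2 b3 c, p a (p b1 b2 b3) c = p (p a b1 c) b2 (p a b3 c))
    (C4 : ∀ a b, p a z b = a ∧ p b o a = a)
    (hji : ∀ c, p c c o = c) :
    ∀ a b c, p c (p a b c) o = p c (p z (p o b z) a) o := by
  intro a b c
  have h1 : ∀ x y, p x z y = x := fun x y => (C4 x y).1
  have h2 : ∀ x y, p x o y = y := fun x y => (C4 y x).2
  rw [C3, C3, hji, h1, C3, h2, h1]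
end

section
/- In a system (A,p,0,1) satisfying C1–C4 with a∧b = p(0,a,b) commutative, if p(a,b,c) = (b̄∧a)∨(b∧c) for all a,b,c (where a∨b = p(a,b,1) and x̄ = p(1,x,0)), then complementation holds: ā∨a = 1 and ā∧a = 0 for all a. -/
theorem stmt_15 {A : Type*} (p : A → A → A → A) (z o : A)
    (C1 : ∀ a, p z a o = a)
    (C2 : ∀ a b, p a b a = a)
    (C3 : ∀ a b1 b2 b3 c, p a (p b1 b2 b3) c = p (p a b1 c) b2 (p a b3 c))
    (C4 : ∀ a b, p a z b = a ∧ p b o a = a)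
    (hmc : ∀ a b, p z a b = p z b a)
    (hp : ∀ a b c, p a b c = p (p z (p o b z) a) (p z b c) o) :
    ∀ a, p (p o a z) a o = o ∧ p z (p o a z) a = z := by
  have l1 : ∀ a b, p a z b = a := fun a b => (C4 a b).1
  have l2 : ∀ a b, p b o a = a := fun a b => (C4 a b).2
  intro x
  -- Goal 1: complement join
  have g1 : p (p o x z) x o = o := by
    have h := hp o x o
    rw [C2, C1, C1] at h
    exact h.symm
  refine ⟨g1, ?_⟩
  -- double complement
  have dblc : p o (p o x z) z = x := by
    have h := C3 o o x z z
    rw [l2 z o, l1 o z, C1] at h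
    exact h
  -- p x x z = z
  have key : p x x z = z := by
    have h := C3 o (p o x z) x o z
    rw [g1, dblc, l2 z o] at h
    exact h.symm
  have h := C3 z o x z x
  rw [l2 x z, l1 z x, key] at h
  exact h
end

section
/- Let (A,p,0,1) satisfy C1–C4, with a∧b = p(0,a,b), a∨b = p(a,b,1), x̄ = p(1,x,0), and suppose ∧ is commutative. If p(a,a,b) = p(0,a,b) for all a,b, then (A,∨,∧,x̄,0,1) is a Boolean algebra (a complemented distributive bounded lattice). -/
theorem stmt_17 {A : Type*} (p : A → A → A → A) (z o : A)
    (C1 : ∀ a, p z a o = a)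
    (C2 : ∀ a b, p a b a = a)
    (C3 : ∀ a b1 b2 b3 c, p a (p b1 b2 b3) c = p (p a b1 c) b2 (p a b3 c))
    (C4 : ∀ a b, p a z b = a ∧ p b o a = a)
    (hmc : ∀ a b, p z a b = p z b a)
    (hT3 : ∀ a b, p a a b = p z a b) :
    ∃ B : BooleanAlgebra A,
      B.inf = (fun a b => p z a b) ∧ B.sup = (fun a b => p a b o) ∧
      B.compl = (fun x => p o x z) ∧ B.bot = z ∧ B.top = o := by
  have paz : ∀ a b, p a z b = a := fun a b => (C4 a b).1
  have poa : ∀ a b, p b o a = a := fun a b => (C4 a b).2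
  have hoz : p o o z = z := poa z o
  have hozz : p o z z = o := paz o z
  have invol : ∀ x, p o (p o x z) z = x := fun x => by
    rw [C3, hoz, hozz, C1]
  have pzoa : ∀ a, p z o a = a := fun a => by rw [hmc, C1]
  have pzaa : ∀ a, p z a a = a := fun a => by rw [← hT3, C2]
  have paoo : ∀ a, p a o o = o := fun a => poa o a
  -- sup associativity
  have sassoc : ∀ a b c, p a (p b c o) o = p (p a b o) c o := fun a b c => by
    rw [C3, paoo]
  -- inf associativity
  have iassoc : ∀ a b c, p z (p z a b) c = p z a (p z b c) := fun a b c => by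
    rw [C3, paz]
  -- absorption laws
  have inf_sup_self' : ∀ a b, p z a (p a b o) = a := fun a b => by
    rw [hmc a (p a b o), C3, pzaa, pzoa, C2]
  have sup_inf_self' : ∀ a b, p a (p z a b) o = a := fun a b => by
    rw [C3, paz, hT3, inf_sup_self']
  -- commutativity of sup, via double complement
  have hd : ∀ a b, p z (p o a z) (p o b z) = p (p o b z) a z := fun a b => by
    rw [C3, pzoa, paz]
  have dmap : ∀ a b, p o (p (p o b z) a z) z = p b a o := fun a b => by
    rw [C3, invol, hozz]
  have scomm : ∀ a b, p a b o = p b a o := fun a b => by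
    rw [← dmap b a, ← dmap a b, ← hd a b, ← hd b a, hmc]
  -- complement laws
  have compl_inf : ∀ a, p z a (p o a z) = z := fun a => by
    rw [hmc a (p o a z), C3, pzoa, paz, hT3, C2]
  have compl_sup : ∀ a, p a (p o a z) o = o := fun a => by
    have h := dmap (p o a z) a
    rw [hT3, C2, hozz] at h
    exact h.symm
  -- distributivity
  have distrib : ∀ a b c, p a (p z b c) o = p z (p a b o) (p a c o) := fun a b c => by
    rw [C3 a z b, paz, C3 z a b, inf_sup_self', pzoa]
  letI iSup : Max A := ⟨fun a b => p a b o⟩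
  letI iInf : Min A := ⟨fun a b => p z a b⟩
  letI L : Lattice A := Lattice.mk' scomm (fun a b c => (sassoc a b c).symm) hmc
    (fun a b c => iassoc a b c) sup_inf_self' inf_sup_self'
  letI D : DistribLattice A :=
    { L with le_sup_inf := fun x y w => le_of_eq (distrib x y w).symm }
  refine ⟨{ D with
    top := o
    bot := z
    compl := fun x => p o x z
    sdiff := fun a b => p z a (p o b z)
    himp := fun a b => p b (p o a z) o
    le_top := fun a => sup_eq_right.mp (paoo a)
    bot_le := fun a => sup_eq_right.mp (C1 a)
    inf_compl_le_bot := fun a => le_of_eq (compl_inf a)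
    top_le_sup_compl := fun a => le_of_eq (compl_sup a).symm
    sdiff_eq := fun a b => rfl
    himp_eq := fun a b => rfl }, rfl, rfl, rfl, rfl, rfl⟩
end

section
/- Let (A,p,0,1) satisfy C1–C4 with a∧b = p(0,a,b) commutative. If (A,∨,∧,x̄,0,1) is a Boolean algebra (with a∨b = p(a,b,1) and x̄ = p(1,x,0)), then p(a,b,c) = (b̄∧a)∨(b∧c) for all a,b,c. -/
theorem stmt_18 {A : Type*} [BooleanAlgebra A] (p : A → A → A → A)
    (C1 : ∀ a, p ⊥ a ⊤ = a)
    (C2 : ∀ a b, p a b a = a)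
    (C3 : ∀ a b1 b2 b3 c, p a (p b1 b2 b3) c = p (p a b1 c) b2 (p a b3 c))
    (C4 : ∀ a b, p a ⊥ b = a ∧ p b ⊤ a = a)
    (h_inf : ∀ a b : A, a ⊓ b = p ⊥ a b)
    (h_sup : ∀ a b : A, a ⊔ b = p a b ⊤)
    (h_compl : ∀ x : A, xᶜ = p ⊤ x ⊥) :
    ∀ a b c, p a b c = (bᶜ ⊓ a) ⊔ (b ⊓ c) := by
  intro a b c
  have haa : p ⊥ a a = a := by rw [← h_inf, inf_idem]
  have haaT : p a a ⊤ = a := by rw [← h_sup, sup_idem]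
  -- meet with a
  have hA : p a b c ⊓ a = p a b (c ⊓ a) := by
    rw [h_inf, C3, haa, ← h_inf]
  -- join with a
  have hB : a ⊔ p a b c = p a b (a ⊔ c) := by
    rw [h_sup, C3, haaT, ← h_sup]
  -- Boolean value of p a b (c ⊓ a)
  have hC : ((c ⊓ a) ⊔ bᶜ) ⊓ a = p a b (c ⊓ a) := by
    rw [h_inf, h_sup, C3, (C4 a ⊥).2, ← h_inf]
    have h1 : c ⊓ a ⊓ a = c ⊓ a := by rw [inf_assoc, inf_idem]
    rw [h1, h_compl, C3, (C4 a (c ⊓ a)).2, (C4 (c ⊓ a) a).1]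
  -- Boolean value of p a b (a ⊔ c)
  have hD : a ⊔ (b ⊓ c) = p a b (a ⊔ c) := by
    rw [h_inf, h_sup, C3, (C4 a ⊤).1, ← h_sup]
  -- Boolean-algebra facts
  have key : (bᶜ ⊓ a) ⊔ (b ⊓ c ⊓ a) = (c ⊓ a) ⊔ (bᶜ ⊓ a) := by
    apply le_antisymm
    · exact sup_le le_sup_right (le_sup_of_le_left (inf_le_inf_right a inf_le_right))
    · refine sup_le ?_ le_sup_left
      have hsplit : c ⊓ a = (b ⊓ (c ⊓ a)) ⊔ (bᶜ ⊓ (c ⊓ a)) := by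
        rw [← inf_sup_right, sup_compl_eq_top, top_inf_eq]
      rw [hsplit]
      exact sup_le (le_sup_of_le_right (inf_assoc b c a).ge)
        (le_sup_of_le_left (inf_le_inf_left bᶜ inf_le_right))
  have e1 : ((bᶜ ⊓ a) ⊔ (b ⊓ c)) ⊓ a = ((c ⊓ a) ⊔ bᶜ) ⊓ a := by
    rw [inf_sup_right, inf_sup_right, inf_assoc bᶜ a a, inf_idem, inf_assoc c a a, inf_idem, key]
  have e2 : a ⊔ ((bᶜ ⊓ a) ⊔ (b ⊓ c)) = a ⊔ (b ⊓ c) := by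
    have habs : a ⊔ bᶜ ⊓ a = a := sup_eq_left.mpr inf_le_right
    rw [← sup_assoc, habs]
  refine eq_of_inf_eq_sup_eq (a := a) ?_ ?_
  · rw [hA, ← hC, e1]
  · rw [sup_comm (p a b c) a, sup_comm ((bᶜ ⊓ a) ⊔ (b ⊓ c)) a, hB, e2, hD]
end
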